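/- Let ‖·‖ be a norm on ℝⁿ whose modulus of smoothness satisfies ρ(τ) ≤ C·τ^q for all τ ∈ (0,1), with constants C, q ≥ 1. Let L ⊆ ℝⁿ be a discrete additive subgroup (a lattice), let L′ ⊆ L be an additive subgroup, and let ε ∈ (0,1) be such that d(x, L′) ≤ d(x, L) + ε^{1/q} for every x ∈ ℝⁿ, where d denotes the distance with respect to ‖·‖. Then every t ∈ ℝⁿ with d(t, L) ≥ 1 satisfies d(t, L′) ≤ d(t, L) + 2Cε. -/
import Mathlib


/-- Sparsification preserves distances for smooth norms: if the norm `Nm` on ℝⁿ has modulus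
of smoothness bounded by `C τ^q` (`C, q ≥ 1`), `L` is a lattice (discrete additive subgroup),
`L' ≤ L` is a subgroup with `d(x, L') ≤ d(x, L) + ε^{1/q}` for all `x`, then every target `t`
with `d(t, L) ≥ 1` satisfies `d(t, L') ≤ d(t, L) + 2Cε`. Distances are infima of `Nm`. -/
theorem stmt_16 (n : ℕ) (Nm : (Fin n → ℝ) → ℝ)
    (h_add : ∀ x y, Nm (x + y) ≤ Nm x + Nm y)
    (h_smul : ∀ (a : ℝ) (x), Nm (a • x) = |a| * Nm x)
    (h_pos : ∀ x, x ≠ 0 → 0 < Nm x)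
    (C q : ℝ) (hC : 1 ≤ C) (hq : 1 ≤ q)
    (hmod : ∀ τ ∈ Set.Ioo (0 : ℝ) 1, ∀ a b : Fin n → ℝ,
      Nm a = 1 → Nm b = 1 →
      Nm (a + τ • b) + Nm (a - τ • b) - 2 ≤ 2 * (C * τ ^ q))
    (L L' : AddSubgroup (Fin n → ℝ)) (hL : L' ≤ L)
    (hdisc : DiscreteTopology L)
    (ε : ℝ) (hε0 : 0 < ε) (hε1 : ε < 1)
    (hsparse : ∀ x : Fin n → ℝ,
      sInf ((fun s => Nm (x - s)) '' (L' : Set (Fin n → ℝ)))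
        ≤ sInf ((fun s => Nm (x - s)) '' (L : Set (Fin n → ℝ))) + ε ^ (1 / q)) :
    ∀ t : Fin n → ℝ, 1 ≤ sInf ((fun s => Nm (t - s)) '' (L : Set (Fin n → ℝ))) →
      sInf ((fun s => Nm (t - s)) '' (L' : Set (Fin n → ℝ)))
        ≤ sInf ((fun s => Nm (t - s)) '' (L : Set (Fin n → ℝ))) + 2 * C * ε := by
  intro t hT
  have hq0 : (0 : ℝ) < q := lt_of_lt_of_le one_pos hq
  have hC0 : (0 : ℝ) < C := lt_of_lt_of_le one_pos hC
  set δ : ℝ := ε ^ (1 / q) with hδdef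
  have hδ0 : 0 < δ := Real.rpow_pos_of_pos hε0 _
  have hδ1 : δ < 1 := Real.rpow_lt_one hε0.le hε1 (by positivity)
  have hδq : δ ^ q = ε := by
    rw [hδdef, ← Real.rpow_mul hε0.le, one_div_mul_cancel (ne_of_gt hq0), Real.rpow_one]
  have hNm0 : Nm 0 = 0 := by
    have h := h_smul 0 0
    simpa using h
  have hNmnn : ∀ x, 0 ≤ Nm x := by
    intro x
    by_cases hx : x = 0
    · simp [hx, hNm0]
    · exact (h_pos x hx).le
  have hbdd : ∀ (x : Fin n → ℝ) (S : Set (Fin n → ℝ)),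
      BddBelow ((fun s => Nm (x - s)) '' S) := by
    intro x S
    exact ⟨0, by rintro v ⟨s, _, rfl⟩; exact hNmnn _⟩
  set R : ℝ := sInf ((fun s => Nm (t - s)) '' (L : Set (Fin n → ℝ))) with hRdef
  -- key estimate for every small ι > 0
  have key : ∀ ι : ℝ, 0 < ι → ι < 1 - δ →
      sInf ((fun s => Nm (t - s)) '' (L' : Set (Fin n → ℝ)))
        ≤ R + 2 * ι + 2 * C * (δ + ι) ^ q := by
    intro ι hι0 hι1
    have hpow_pos : 0 < (δ + ι) ^ q := Real.rpow_pos_of_pos (by linarith) q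
    -- choose y₁ ∈ L with Nm (t - y₁) < R + ι
    have hne : ((fun s => Nm (t - s)) '' (L : Set (Fin n → ℝ))).Nonempty :=
      ⟨Nm (t - 0), 0, L.zero_mem, rfl⟩
    obtain ⟨v, ⟨y₁, hy₁L, rfl⟩, hv⟩ := Real.lt_sInf_add_pos hne hι0
    simp only at hv
    set A : Fin n → ℝ := t - y₁ with hAdef
    set RA : ℝ := Nm A with hRAdef
    have hRA_lt : RA < R + ι := hv
    have hRA_ge : R ≤ RA := csInf_le (hbdd t _) ⟨y₁, hy₁L, rfl⟩
    have hRA1 : (1 : ℝ) ≤ RA := le_trans hT hRA_ge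
    have hRA0 : (0 : ℝ) < RA := lt_of_lt_of_le one_pos hRA1
    -- choose z' ∈ L' with Nm (y₁ - z') < δ + ι
    have hs1 : sInf ((fun s => Nm (y₁ - s)) '' (L' : Set (Fin n → ℝ))) ≤ δ := by
      have h1 := hsparse y₁
      have h0 : sInf ((fun s => Nm (y₁ - s)) '' (L : Set (Fin n → ℝ))) ≤ 0 :=
        csInf_le (hbdd y₁ _) ⟨y₁, hy₁L, by simp [hNm0]⟩
      linarith
    have hne' : ((fun s => Nm (y₁ - s)) '' (L' : Set (Fin n → ℝ))).Nonempty :=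
      ⟨Nm (y₁ - 0), 0, L'.zero_mem, rfl⟩
    obtain ⟨w, ⟨z', hz'L', rfl⟩, hw⟩ := Real.lt_sInf_add_pos hne' hι0
    simp only at hw
    set e : Fin n → ℝ := y₁ - z' with hedef
    set η : ℝ := Nm e with hηdef
    have hη_lt : η < δ + ι := lt_of_lt_of_le hw (by linarith)
    have hη1 : η < 1 := by linarith
    have hd'le : sInf ((fun s => Nm (t - s)) '' (L' : Set (Fin n → ℝ))) ≤ Nm (t - z') :=
      csInf_le (hbdd t _) ⟨z', hz'L', rfl⟩
    have htz : t - z' = A + e := by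
      rw [hAdef, hedef]; abel
    by_cases he : e = 0
    · -- then z' = y₁ and Nm (t - z') = RA < R + ι
      have : Nm (t - z') = RA := by rw [htz, he, add_zero]
      nlinarith [hd'le, this]
    · have hη0 : 0 < η := h_pos e he
      set τ : ℝ := η / RA with hτdef
      have hτ0 : 0 < τ := div_pos hη0 hRA0
      have hτ1 : τ < 1 := (div_lt_one hRA0).2 (lt_of_lt_of_le hη1 hRA1)
      have ha : Nm (RA⁻¹ • A) = 1 := by
        rw [h_smul, abs_of_pos (inv_pos.2 hRA0), ← hRAdef, inv_mul_cancel₀ (ne_of_gt hRA0)]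
      have hb : Nm (η⁻¹ • e) = 1 := by
        rw [h_smul, abs_of_pos (inv_pos.2 hη0), ← hηdef, inv_mul_cancel₀ (ne_of_gt hη0)]
      have hsm := hmod τ ⟨hτ0, hτ1⟩ (RA⁻¹ • A) (η⁻¹ • e) ha hb
      have hsc : τ * η⁻¹ = RA⁻¹ := by
        rw [hτdef, div_mul_eq_mul_div, mul_inv_cancel₀ (ne_of_gt hη0), one_div]
      have hplus : RA⁻¹ • A + τ • η⁻¹ • e = RA⁻¹ • (A + e) := by
        rw [smul_smul, hsc, ← smul_add]
      have hminus : RA⁻¹ • A - τ • η⁻¹ • e = RA⁻¹ • (A - e) := by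
        rw [smul_smul, hsc, ← smul_sub]
      rw [hplus, hminus, h_smul, h_smul, abs_of_pos (inv_pos.2 hRA0)] at hsm
      -- multiply through by RA
      have hsum : Nm (A + e) + Nm (A - e) ≤ 2 * RA + 2 * C * τ ^ q * RA := by
        have h2 : RA⁻¹ * Nm (A + e) + RA⁻¹ * Nm (A - e) ≤ 2 + 2 * (C * τ ^ q) := by
          linarith
        have h3 := mul_le_mul_of_nonneg_left h2 hRA0.le
        rw [mul_add, ← mul_assoc, ← mul_assoc, mul_inv_cancel₀ (ne_of_gt hRA0),
          one_mul, one_mul] at h3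
        linarith
      -- lower bound: A - e = t - (y₁ + (y₁ - z')), a lattice vector
      have hlow : R ≤ Nm (A - e) := by
        have hmem : y₁ + (y₁ - z') ∈ (L : Set (Fin n → ℝ)) :=
          L.add_mem hy₁L (L.sub_mem hy₁L (hL hz'L'))
        have heq : A - e = t - (y₁ + (y₁ - z')) := by rw [hAdef, hedef]; abel
        rw [heq]
        exact csInf_le (hbdd t _) ⟨y₁ + (y₁ - z'), hmem, rfl⟩
      -- bound the smoothness term: τ ^ q * RA ≤ η ^ q ≤ (δ + ι) ^ q
      have hterm : τ ^ q * RA ≤ (δ + ι) ^ q := by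
        have h1 : τ ^ q = τ ^ (q - 1) * τ := by
          rw [← Real.rpow_add_one (ne_of_gt hτ0) (q - 1)]
          norm_num
        have hτη : τ ≤ η := by
          rw [hτdef]
          exact div_le_self hη0.le hRA1
        have h2 : τ ^ (q - 1) ≤ η ^ (q - 1) :=
          Real.rpow_le_rpow hτ0.le hτη (by linarith)
        have hτRA : τ * RA = η := by
          rw [hτdef]
          exact div_mul_cancel₀ η (ne_of_gt hRA0)
        have h3 : τ ^ q * RA = τ ^ (q - 1) * η := by
          rw [h1, mul_assoc, hτRA]
        have h4 : η ^ (q - 1) * η = η ^ q := by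
          rw [← Real.rpow_add_one (ne_of_gt hη0) (q - 1)]
          norm_num
        have h5 : η ^ q ≤ (δ + ι) ^ q :=
          Real.rpow_le_rpow hη0.le hη_lt.le hq0.le
        have h6 : τ ^ (q - 1) * η ≤ η ^ (q - 1) * η :=
          mul_le_mul_of_nonneg_right h2 hη0.le
        calc τ ^ q * RA = τ ^ (q - 1) * η := h3
          _ ≤ η ^ (q - 1) * η := h6
          _ = η ^ q := h4
          _ ≤ (δ + ι) ^ q := h5
      -- combine
      have hfin : Nm (t - z') ≤ R + 2 * ι + 2 * C * (δ + ι) ^ q := by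
        rw [htz]
        nlinarith [hsum, hlow, hterm, hRA_lt, mul_le_mul_of_nonneg_left hterm (by linarith : (0:ℝ) ≤ 2 * C)]
      linarith
  -- limiting argument: let ι → 0⁺
  have hcont : ContinuousAt (fun ι : ℝ => R + 2 * ι + 2 * C * (δ + ι) ^ q) 0 := by
    have h1 : ContinuousAt (fun ι : ℝ => (δ + ι) ^ q) 0 := by
      have h2 : ContinuousAt (fun x : ℝ => x ^ q) (δ + 0) :=
        Real.continuousAt_rpow_const _ _ (Or.inl (by linarith))
      exact h2.comp (by fun_prop)
    exact (((continuousAt_const).add (by fun_prop)).add ((continuousAt_const).mul h1))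
  have htend : Filter.Tendsto (fun ι : ℝ => R + 2 * ι + 2 * C * (δ + ι) ^ q)
      (nhdsWithin 0 (Set.Ioi 0)) (nhds (R + 2 * 0 + 2 * C * (δ + 0) ^ q)) :=
    (hcont.tendsto).mono_left nhdsWithin_le_nhds
  have hev : ∀ᶠ ι in nhdsWithin (0 : ℝ) (Set.Ioi 0),
      sInf ((fun s => Nm (t - s)) '' (L' : Set (Fin n → ℝ)))
        ≤ R + 2 * ι + 2 * C * (δ + ι) ^ q := by
    filter_upwards [Ioo_mem_nhdsGT_of_mem
      (show (0:ℝ) ∈ Set.Ico (0:ℝ) (1 - δ) from ⟨le_refl _, by linarith⟩)] with ι hι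
    exact key ι hι.1 hι.2
  have hlim := ge_of_tendsto htend hev
  have : R + 2 * 0 + 2 * C * (δ + 0) ^ q = R + 2 * C * ε := by
    rw [add_zero, hδq]; ring
  rw [this] at hlim
  exact hlim
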